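/- Let T = Z_p be a zipper map with λ_min > 1 and symmetric parameter, i.e. x₁+x₂ = 1 and y₁+y₂ = 1. Then T admits horseshoes of all orders: for every k ∈ ℕ there exist compact subintervals I₁,…,I_k of [0,1] with pairwise disjoint interiors such that T(I_i) ⊇ I_j for all i,j ∈ {1,…,k}. -/

import Mathlib

open Set

/-- The zipper operator Φ_p acting on functions, defined piecewise. -/
noncomputable def zipperPhi (x₁ y₁ x₂ y₂ : ℝ) (f : ℝ → ℝ) : ℝ → ℝ := fun x =>
  if x ≤ x₁ then y₁ * f (x / x₁)
  else if x ≤ x₂ then y₁ - (y₁ - y₂) * f ((x - x₁) / (x₂ - x₁))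
  else y₂ + (1 - y₂) * f ((x - x₂) / (1 - x₂))

/-- Continuous maps f : [0,1] → [0,1] with f 0 = 0 and f 1 = 1. -/
def IsC00 (f : ℝ → ℝ) : Prop :=
  ContinuousOn f (Icc 0 1) ∧ MapsTo f (Icc 0 1) (Icc 0 1) ∧ f 0 = 0 ∧ f 1 = 1

/-- A hypersensitive zipper map with symmetric parameter admits horseshoes of all orders. -/
theorem zipper_symmetric_horseshoes (x₁ y₁ x₂ y₂ : ℝ)
    (hx₁ : x₁ ∈ Ioo (0:ℝ) 1) (hy₁ : y₁ ∈ Ioo (0:ℝ) 1)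
    (hx₂ : x₂ ∈ Ioo (0:ℝ) 1) (hy₂ : y₂ ∈ Ioo (0:ℝ) 1)
    (hx : x₁ < x₂) (hy : y₂ < y₁)
    (hlam : 1 < min (y₁ / x₁) (min ((y₁ - y₂) / (x₂ - x₁)) ((1 - y₂) / (1 - x₂))))
    (hsymx : x₁ + x₂ = 1) (hsymy : y₁ + y₂ = 1)
    (Z : ℝ → ℝ) (hZ : IsC00 Z) (hfix : EqOn (zipperPhi x₁ y₁ x₂ y₂ Z) Z (Icc 0 1)) :
    ∀ k : ℕ, ∃ I : Fin k → Set ℝ,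
      (∀ i, ∃ a b : ℝ, a < b ∧ 0 ≤ a ∧ b ≤ 1 ∧ I i = Icc a b) ∧
      (∀ i j, i ≠ j → interior (I i) ∩ interior (I j) = ∅) ∧
      (∀ i j, I j ⊆ Z '' I i) := by
  obtain ⟨hx₁0, hx₁1⟩ := hx₁
  obtain ⟨hy₁0, hy₁1⟩ := hy₁
  obtain ⟨hx₂0, hx₂1⟩ := hx₂
  obtain ⟨hy₂0, hy₂1⟩ := hy₂
  obtain ⟨Zc, Zm, Z0, Z1⟩ := hZ
  set a : ℝ := x₂ - x₁ with ha_def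
  set b : ℝ := y₁ - y₂ with hb_def
  have ha0 : 0 < a := by rw [ha_def]; linarith
  have ha1 : a < 1 := by rw [ha_def]; linarith
  have hb0 : 0 < b := by rw [hb_def]; linarith
  have hb1 : b < 1 := by rw [hb_def]; linarith
  have hmid : (1:ℝ) < b / a :=
    lt_of_lt_of_le hlam (le_trans (min_le_right _ _) (min_le_left _ _))
  have hba : a < b := by
    have := (one_lt_div ha0).mp hmid
    exact this
  -- the middle-branch functional equation
  have key : ∀ x ∈ Icc (0:ℝ) 1, Z (x₁ + a * x) = y₁ - b * Z x := by
    intro x hx'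
    obtain ⟨hx0, hx1'⟩ := hx'
    have hax : a * x ≤ a := by nlinarith
    have hmem : x₁ + a * x ∈ Icc (0:ℝ) 1 := by
      constructor
      · nlinarith
      · have : x₁ + a * x ≤ x₂ := by rw [ha_def] at hax ⊢; linarith
        linarith
    have hfe := hfix hmem
    rw [← hfe]
    unfold zipperPhi
    rcases eq_or_lt_of_le hx0 with h0 | h0
    · rw [← h0]
      have h1 : x₁ + a * 0 ≤ x₁ := by ring_nf; exact le_rfl
      rw [if_pos h1]
      have h2 : (x₁ + a * 0) / x₁ = 1 := by
        field_simp
        ring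
      rw [h2, Z1, Z0]; ring
    · have h1 : ¬ (x₁ + a * x ≤ x₁) := by nlinarith
      have h2 : x₁ + a * x ≤ x₂ := by linarith
      rw [if_neg h1, if_pos h2]
      have h3 : (x₁ + a * x - x₁) / (x₂ - x₁) = x := by
        rw [← ha_def]
        field_simp
        ring
      rw [h3, ← hb_def]
  -- the key sequence of points
  have hx1half : x₁ = (1 - a)/2 := by rw [ha_def]; linarith
  have hy1half : y₁ = (1 + b)/2 := by rw [hb_def]; linarith
  have hq : ∀ m : ℕ, Z (1/2 - a^m/2) = 1/2 - (-b)^m/2 := by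
    intro m
    induction m with
    | zero => norm_num; exact Z0
    | succ m ih =>
      have h1 : a^m ≤ 1 := pow_le_one₀ ha0.le ha1.le
      have h2 : (0:ℝ) < a^m := pow_pos ha0 m
      have hmem : (1/2 - a^m/2 : ℝ) ∈ Icc (0:ℝ) 1 := ⟨by linarith, by linarith⟩
      have hk := key _ hmem
      have harg : x₁ + a * (1/2 - a^m/2) = 1/2 - a^(m+1)/2 := by
        rw [hx1half]; ring
      rw [harg] at hk
      rw [hk, ih, hy1half]; ring
  intro k
  -- choose the depth n
  obtain ⟨n, hn⟩ := pow_unbounded_of_one_lt ((1/b)^(2*k)) hmid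
  have hkey : a ^ n < b ^ (n + 2*k) := by
    have h1 : (0:ℝ) < a^n := pow_pos ha0 n
    have h2 : (0:ℝ) < b^(2*k) := pow_pos hb0 _
    rw [one_div, inv_pow, ← one_div, div_pow] at hn
    rw [div_lt_div_iff₀ h2 h1] at hn
    rw [pow_add]
    nlinarith [hn]
  set g : ℕ → ℝ := fun j => 1/2 - a^(n+j)/2 with hg
  have gpos : ∀ j, 0 ≤ g j := by
    intro j
    have : a^(n+j) ≤ 1 := pow_le_one₀ ha0.le ha1.le
    simp only [hg]; linarith
  have glt : ∀ j, g j < 1/2 := by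
    intro j
    have : (0:ℝ) < a^(n+j) := pow_pos ha0 _
    simp only [hg]; linarith
  have gmono : ∀ {p q : ℕ}, p ≤ q → g p ≤ g q := by
    intro p q hpq
    have := pow_le_pow_of_le_one ha0.le ha1.le (Nat.add_le_add_left hpq n)
    simp only [hg]; linarith
  have gstrict : ∀ {p q : ℕ}, p < q → g p < g q := by
    intro p q hpq
    have := pow_lt_pow_right_of_lt_one₀ ha0 ha1 (Nat.add_lt_add_left hpq n)
    simp only [hg]; linarith
  have gZ : ∀ j : ℕ, Z (g j) = 1/2 - (-b)^(n+j)/2 := fun j => hq (n + j)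
  refine ⟨fun i => Icc (g (2*(i:ℕ))) (g (2*(i:ℕ)+1)), ?_, ?_, ?_⟩
  · intro i
    exact ⟨g (2*(i:ℕ)), g (2*(i:ℕ)+1), gstrict (Nat.lt_succ_self _), gpos _,
      le_trans (glt _).le (by norm_num), rfl⟩
  · intro i j hij
    rw [interior_Icc, interior_Icc]
    rcases Ne.lt_or_gt (fun h : (i:ℕ) = (j:ℕ) => hij (Fin.ext h)) with h | h
    · have hle : g (2*(i:ℕ)+1) ≤ g (2*(j:ℕ)) := gmono (by omega)
      ext x
      simp only [mem_inter_iff, mem_Ioo, mem_empty_iff_false, iff_false, not_and]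
      intro h1 h2 h3
      linarith [h1.2, h3]
    · have hle : g (2*(j:ℕ)+1) ≤ g (2*(i:ℕ)) := gmono (by omega)
      ext x
      simp only [mem_inter_iff, mem_Ioo, mem_empty_iff_false, iff_false, not_and]
      intro h1 h2 h3
      linarith [h1.1, h2]
  · intro i j
    -- the big interval K
    set β : ℝ := b^(n+2*k) with hβ
    have hβ0 : 0 < β := pow_pos hb0 _
    -- I j ⊆ K
    have hIK : Icc (g (2*(j:ℕ))) (g (2*(j:ℕ)+1)) ⊆ Icc (1/2 - β/2) (1/2 + β/2) := by
      apply Icc_subset_Icc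
      · have h0 : g 0 ≤ g (2*(j:ℕ)) := gmono (Nat.zero_le _)
        have : g 0 = 1/2 - a^(n+0)/2 := rfl
        rw [this] at h0
        simp only [Nat.add_zero] at h0
        linarith [hkey]
      · linarith [glt (2*(j:ℕ)+1), hβ0]
    -- K ⊆ Z '' I i
    have hii : (i:ℕ) < k := i.isLt
    have hbi1 : β ≤ b^(n+2*(i:ℕ)) := pow_le_pow_of_le_one hb0.le hb1.le (by omega)
    have hbi2 : β ≤ b^(n+(2*(i:ℕ)+1)) := pow_le_pow_of_le_one hb0.le hb1.le (by omega)
    have hLR : g (2*(i:ℕ)) ≤ g (2*(i:ℕ)+1) := gmono (Nat.le_succ _)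
    have hcont : ContinuousOn Z (Icc (g (2*(i:ℕ))) (g (2*(i:ℕ)+1))) := by
      apply Zc.mono
      exact Icc_subset_Icc (gpos _) (le_trans (glt _).le (by norm_num))
    have hZL := gZ (2*(i:ℕ))
    have hZR := gZ (2*(i:ℕ)+1)
    have hKZ : Icc (1/2 - β/2) (1/2 + β/2) ⊆
        Z '' Icc (g (2*(i:ℕ))) (g (2*(i:ℕ)+1)) := by
      rcases Nat.even_or_odd n with he | ho
      · -- n even : Z at left endpoint is low, at right endpoint is high
        have e1 : ((-b)^(n+2*(i:ℕ)) : ℝ) = b^(n+2*(i:ℕ)) :=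
          (he.add (even_two_mul _)).neg_pow b
        have e2 : ((-b)^(n+(2*(i:ℕ)+1)) : ℝ) = -(b^(n+(2*(i:ℕ)+1))) :=
          (he.add_odd ((even_two_mul _).add_one)).neg_pow b
        rw [e1] at hZL; rw [e2] at hZR
        refine subset_trans ?_ (intermediate_value_Icc hLR hcont)
        apply Icc_subset_Icc
        · rw [hZL]; linarith
        · rw [hZR]; linarith
      · -- n odd : Z at left endpoint is high, at right endpoint is low
        have e1 : ((-b)^(n+2*(i:ℕ)) : ℝ) = -(b^(n+2*(i:ℕ))) :=
          (ho.add_even (even_two_mul _)).neg_pow b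
        have e2 : ((-b)^(n+(2*(i:ℕ)+1)) : ℝ) = b^(n+(2*(i:ℕ)+1)) :=
          (ho.add_odd ((even_two_mul _).add_one)).neg_pow b
        rw [e1] at hZL; rw [e2] at hZR
        refine subset_trans ?_ (intermediate_value_Icc' hLR hcont)
        apply Icc_subset_Icc
        · rw [hZR]; linarith
        · rw [hZL]; linarith
    exact subset_trans hIK hKZ
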